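/- arXiv:1211.5669 — 4 statements merged into one kernel-verified Lean document; each statement's English description precedes it below -/
import Mathlib

section
/- Let η_0 < η_1 < ... < η_l be distinct reals with l ≥ 3, and let ξ_0 < ... < ξ_k be distinct reals. Suppose d_{m,ℓ} ∈ ℝ (0 ≤ m ≤ k, 0 ≤ ℓ ≤ l) satisfy: (i) for each ℓ with 2 ≤ ℓ ≤ l-2, Σ_{m=0}^{k} d_{m,ℓ}(x - ξ_m)^3 = 0 as a polynomial in x; and (ii) for each m with 0 ≤ m ≤ k, Σ_{ℓ=0}^{l} d_{m,ℓ}(y - η_ℓ)^3 = 0 as a polynomial in y. Then for every ℓ ∈ {0, 1, l-1, l}, Σ_{m=0}^{k} d_{m,ℓ}(x - ξ_m)^3 = 0 as a polynomial in x. -/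
/-- If `A(y-a)^3 + B(y-b)^3 + C(y-c)^3 + D(y-d)^3 = 0` for all `y` and `a` differs
from `b, c, d`, then `A = 0`. -/
lemma aux4 (a b c d A B C D : ℝ) (hab : a ≠ b) (hac : a ≠ c) (had : a ≠ d)
    (h : ∀ y : ℝ, A * (y - a) ^ 3 + B * (y - b) ^ 3 + C * (y - c) ^ 3 + D * (y - d) ^ 3 = 0) :
    A = 0 := by
  have h0 := h 0
  have h1 := h 1
  have hm1 := h (-1)
  have h2 := h 2
  have hs3 : A * a ^ 3 + B * b ^ 3 + C * c ^ 3 + D * d ^ 3 = 0 := by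
    linear_combination (-1 : ℝ) * h0
  have hs1 : A * a + B * b + C * c + D * d = 0 := by
    linear_combination (-1/6 : ℝ) * h1 + (-1/6 : ℝ) * hm1 + (1/3 : ℝ) * h0
  have hs0 : A + B + C + D = 0 := by
    linear_combination (1/6 : ℝ) * h2 + (-1/2 : ℝ) * h1 + (-1/6 : ℝ) * hm1 + (1/2 : ℝ) * h0
  have hs2 : A * a ^ 2 + B * b ^ 2 + C * c ^ 2 + D * d ^ 2 = 0 := by
    linear_combination (1/3 : ℝ) * h1 + (-1/9 : ℝ) * hm1 + (-1/18 : ℝ) * h2 + (-1/6 : ℝ) * h0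
  have key : A * ((a - b) * (a - c) * (a - d)) = 0 := by
    linear_combination hs3 - (b + c + d) * hs2 + (b * c + b * d + c * d) * hs1 - b * c * d * hs0
  have hne : (a - b) * (a - c) * (a - d) ≠ 0 :=
    mul_ne_zero (mul_ne_zero (sub_ne_zero.2 hab) (sub_ne_zero.2 hac)) (sub_ne_zero.2 had)
  exact (mul_eq_zero.1 key).resolve_right hne

theorem stmt2 (l k : ℕ) (hl : 3 ≤ l)
    (η : Fin (l + 1) → ℝ) (hη : StrictMono η)
    (ξ : Fin (k + 1) → ℝ) (hξ : StrictMono ξ)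
    (d : Fin (k + 1) → Fin (l + 1) → ℝ)
    (hi : ∀ ℓ : Fin (l + 1), 2 ≤ (ℓ : ℕ) → (ℓ : ℕ) ≤ l - 2 →
      ∀ x : ℝ, ∑ m : Fin (k + 1), d m ℓ * (x - ξ m) ^ 3 = 0)
    (hii : ∀ m : Fin (k + 1), ∀ y : ℝ,
      ∑ ℓ : Fin (l + 1), d m ℓ * (y - η ℓ) ^ 3 = 0) :
    ∀ ℓ : Fin (l + 1), ((ℓ : ℕ) = 0 ∨ (ℓ : ℕ) = 1 ∨ (ℓ : ℕ) = l - 1 ∨ (ℓ : ℕ) = l) →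
      ∀ x : ℝ, ∑ m : Fin (k + 1), d m ℓ * (x - ξ m) ^ 3 = 0 := by
  intro ℓ hℓ x
  set c : Fin (l + 1) → ℝ := fun j => ∑ m : Fin (k + 1), d m j * (x - ξ m) ^ 3 with hc
  show c ℓ = 0
  -- swap the sums
  have Hswap : ∀ y : ℝ, ∑ j : Fin (l + 1), c j * (y - η j) ^ 3 = 0 := by
    intro y
    have e1 : ∑ j : Fin (l + 1), c j * (y - η j) ^ 3
        = ∑ m : Fin (k + 1), (x - ξ m) ^ 3 * (∑ j : Fin (l + 1), d m j * (y - η j) ^ 3) := by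
      simp only [hc, Finset.sum_mul, Finset.mul_sum]
      rw [Finset.sum_comm]
      exact Finset.sum_congr rfl fun m _ => Finset.sum_congr rfl fun j _ => by ring
    rw [e1]
    exact Finset.sum_eq_zero fun m _ => by rw [hii m y, mul_zero]
  have hint : ∀ j : Fin (l + 1), 2 ≤ (j : ℕ) → (j : ℕ) ≤ l - 2 → c j = 0 :=
    fun j h1 h2 => hi j h1 h2 x
  -- the four boundary indices
  have h0lt : 0 < l + 1 := by omega
  have h1lt : 1 < l + 1 := by omega
  have h2lt : l - 1 < l + 1 := by omega
  have h3lt : l < l + 1 := by omega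
  set i0 : Fin (l + 1) := ⟨0, h0lt⟩ with hi0
  set i1 : Fin (l + 1) := ⟨1, h1lt⟩ with hi1
  set i2 : Fin (l + 1) := ⟨l - 1, h2lt⟩ with hi2
  set i3 : Fin (l + 1) := ⟨l, h3lt⟩ with hi3
  have H4 : ∀ y : ℝ, c i0 * (y - η i0) ^ 3 + c i1 * (y - η i1) ^ 3
      + c i2 * (y - η i2) ^ 3 + c i3 * (y - η i3) ^ 3 = 0 := by
    intro y
    have hz : ∀ j ∈ (Finset.univ : Finset (Fin (l + 1))),
        j ∉ ({i0, i1, i2, i3} : Finset (Fin (l + 1))) → c j * (y - η j) ^ 3 = 0 := by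
      intro j _ hj
      simp only [Finset.mem_insert, Finset.mem_singleton, not_or, hi0, hi1, hi2, hi3,
        Fin.ext_iff] at hj
      have hjl := j.isLt
      have : c j = 0 := hint j (by omega) (by omega)
      rw [this, zero_mul]
    have hsum := Finset.sum_subset
      (Finset.subset_univ ({i0, i1, i2, i3} : Finset (Fin (l + 1)))) hz
    rw [Hswap y] at hsum
    have hne01 : i0 ≠ i1 := by simp [hi0, hi1, Fin.ext_iff]
    have hne02 : i0 ≠ i2 := by simp [hi0, hi2, Fin.ext_iff]; omega
    have hne03 : i0 ≠ i3 := by simp [hi0, hi3, Fin.ext_iff]; omega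
    have hne12 : i1 ≠ i2 := by simp [hi1, hi2, Fin.ext_iff]; omega
    have hne13 : i1 ≠ i3 := by simp [hi1, hi3, Fin.ext_iff]; omega
    have hne23 : i2 ≠ i3 := by simp [hi2, hi3, Fin.ext_iff]; omega
    rw [Finset.sum_insert (by simp [hne01, hne02, hne03]),
      Finset.sum_insert (by simp [hne12, hne13]),
      Finset.sum_insert (by simp [hne23]), Finset.sum_singleton] at hsum
    linarith [hsum]
  -- η values at the four indices are distinct
  have hinj := hη.injective
  have hη01 : η i0 ≠ η i1 := fun h => (by simp [hi0, hi1, Fin.ext_iff] : i0 ≠ i1) (hinj h)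
  have hη02 : η i0 ≠ η i2 := fun h =>
    (by simp [hi0, hi2, Fin.ext_iff]; omega : i0 ≠ i2) (hinj h)
  have hη03 : η i0 ≠ η i3 := fun h =>
    (by simp [hi0, hi3, Fin.ext_iff]; omega : i0 ≠ i3) (hinj h)
  have hη12 : η i1 ≠ η i2 := fun h =>
    (by simp [hi1, hi2, Fin.ext_iff]; omega : i1 ≠ i2) (hinj h)
  have hη13 : η i1 ≠ η i3 := fun h =>
    (by simp [hi1, hi3, Fin.ext_iff]; omega : i1 ≠ i3) (hinj h)
  have hη23 : η i2 ≠ η i3 := fun h =>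
    (by simp [hi2, hi3, Fin.ext_iff]; omega : i2 ≠ i3) (hinj h)
  rcases hℓ with h | h | h | h
  · have : ℓ = i0 := Fin.ext (by simp [hi0, h])
    rw [this]
    exact aux4 (η i0) (η i1) (η i2) (η i3) (c i0) (c i1) (c i2) (c i3) hη01 hη02 hη03 H4
  · have : ℓ = i1 := Fin.ext (by simp [hi1, h])
    rw [this]
    exact aux4 (η i1) (η i0) (η i2) (η i3) (c i1) (c i0) (c i2) (c i3)
      (Ne.symm hη01) hη12 hη13 (fun y => by linear_combination H4 y)
  · have : ℓ = i2 := Fin.ext (by simp [hi2, h])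
    rw [this]
    exact aux4 (η i2) (η i0) (η i1) (η i3) (c i2) (c i0) (c i1) (c i3)
      (Ne.symm hη02) (Ne.symm hη12) hη23 (fun y => by linear_combination H4 y)
  · have : ℓ = i3 := Fin.ext (by simp [hi3, h])
    rw [this]
    exact aux4 (η i3) (η i0) (η i1) (η i2) (c i3) (c i0) (c i1) (c i2)
      (Ne.symm hη03) (Ne.symm hη13) (Ne.symm hη23) (fun y => by linear_combination H4 y)
end

section
/- Let p_0, p_1, p_2, p_3 be bicubic polynomials arranged cyclically around a vertex (ξ*, η*), with p_1 − p_0 = γ_2(η)(ξ − ξ*)^3, p_2 − p_1 = μ_1(ξ)(η − η*)^3, p_3 − p_2 = −γ_1(η)(ξ − ξ*)^3, p_0 − p_3 = −μ_2(ξ)(η − η*)^3 for cubic polynomials γ_1, γ_2, μ_1, μ_2. Then there exists d ∈ ℝ with γ_1(η) − γ_2(η) = d(η − η*)^3 and μ_1(ξ) − μ_2(ξ) = d(ξ − ξ*)^3. -/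
open Polynomial

/-- Bidegree at most (3,3) for a bivariate polynomial represented as a
polynomial in ξ with coefficients that are polynomials in η. -/
def BidegLE33 (p : Polynomial (Polynomial ℝ)) : Prop :=
  p.natDegree ≤ 3 ∧ ∀ i : ℕ, (p.coeff i).natDegree ≤ 3

theorem stmt7 (p₀ p₁ p₂ p₃ : Polynomial (Polynomial ℝ))
    (hp₀ : BidegLE33 p₀) (hp₁ : BidegLE33 p₁) (hp₂ : BidegLE33 p₂) (hp₃ : BidegLE33 p₃)
    (γ₁ γ₂ μ₁ μ₂ : Polynomial ℝ)
    (hγ₁ : γ₁.natDegree ≤ 3) (hγ₂ : γ₂.natDegree ≤ 3)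
    (hμ₁ : μ₁.natDegree ≤ 3) (hμ₂ : μ₂.natDegree ≤ 3)
    (ξs ηs : ℝ)
    (h1 : p₁ - p₀ = Polynomial.C γ₂ * (X - Polynomial.C (Polynomial.C ξs)) ^ 3)
    (h2 : p₂ - p₁ = μ₁.map Polynomial.C * Polynomial.C ((X - Polynomial.C ηs) ^ 3))
    (h3 : p₃ - p₂ = -(Polynomial.C γ₁ * (X - Polynomial.C (Polynomial.C ξs)) ^ 3))
    (h4 : p₀ - p₃ = -(μ₂.map Polynomial.C * Polynomial.C ((X - Polynomial.C ηs) ^ 3))) :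
    ∃ d : ℝ, γ₁ - γ₂ = C d * (X - C ηs) ^ 3 ∧ μ₁ - μ₂ = C d * (X - C ξs) ^ 3 := by
  have E : Polynomial.C (γ₁ - γ₂) * (X - Polynomial.C (Polynomial.C ξs)) ^ 3
      = (μ₁ - μ₂).map Polynomial.C * Polynomial.C ((X - Polynomial.C ηs) ^ 3) := by
    rw [Polynomial.map_sub, map_sub]
    linear_combination h1 + h2 + h3 + h4
  set d := (μ₁ - μ₂).coeff 3 with hd
  have hc3 : ((X - Polynomial.C (Polynomial.C ξs)) ^ 3 : Polynomial (Polynomial ℝ)).coeff 3 = 1 := by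
    have hm := (Polynomial.monic_X_sub_C (Polynomial.C ξs)).pow (n := 3)
    have hdeg : ((X - Polynomial.C (Polynomial.C ξs)) ^ 3 : Polynomial (Polynomial ℝ)).natDegree = 3 := by
      simp [Polynomial.natDegree_pow, Polynomial.natDegree_X_sub_C]
    have := hm.coeff_natDegree
    rwa [hdeg] at this
  have hγ : γ₁ - γ₂ = Polynomial.C d * (X - Polynomial.C ηs) ^ 3 := by
    have hE3 := congrArg (fun p => p.coeff 3) E
    simp only [Polynomial.coeff_C_mul, Polynomial.coeff_mul_C, Polynomial.coeff_map, hc3,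
      mul_one] at hE3
    rw [hd]
    exact hE3
  have hne : (Polynomial.C ((X - Polynomial.C ηs) ^ 3) : Polynomial (Polynomial ℝ)) ≠ 0 := by
    exact Polynomial.C_ne_zero.mpr (pow_ne_zero _ (Polynomial.X_sub_C_ne_zero ηs))
  have hμ' : (μ₁ - μ₂).map Polynomial.C
      = Polynomial.C (Polynomial.C d) * (X - Polynomial.C (Polynomial.C ξs)) ^ 3 := by
    have E2 := E
    rw [hγ, map_mul] at E2
    apply mul_left_cancel₀ hne
    linear_combination -E2
  refine ⟨d, hγ, ?_⟩
  apply Polynomial.map_injective (Polynomial.C : ℝ →+* Polynomial ℝ) Polynomial.C_injective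
  rw [hμ']
  simp [Polynomial.map_mul, Polynomial.map_pow, Polynomial.map_sub]
end

section
/- Let S be a finite set (of 'segments') and for each G ∈ S let V(G) be a finite set (of 'vertices'). The following are equivalent: (1) there exists an ordering G_1, ..., G_n of S such that for each j, the set V(G_j) \ ⋃_{i<j} V(G_i) has at least 4 elements; (2) every nonempty subset S' ⊆ S contains some G ∈ S' such that V(G) \ ⋃_{H ∈ S', H ≠ G} V(H) has at least 4 elements. -/
lemma img_univ_eq {β : Type} [DecidableEq β] {S : Finset β} (G : Fin S.card → β)
    (hinj : Function.Injective G) (hmem : ∀ j, G j ∈ S) :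
    Finset.image G Finset.univ = S := by
  apply Finset.eq_of_subset_of_card_le
  · intro x hx
    simp only [Finset.mem_image, Finset.mem_univ, true_and] at hx
    obtain ⟨i, rfl⟩ := hx
    exact hmem i
  · rw [Finset.card_image_of_injective _ hinj, Finset.card_univ, Fintype.card_fin]

theorem stmt10 {α β : Type} [DecidableEq α] [DecidableEq β]
    (S : Finset β) (V : β → Finset α) :
    (∃ G : Fin S.card → β, Function.Injective G ∧ (∀ j, G j ∈ S) ∧
        ∀ j : Fin S.card,
          4 ≤ (V (G j) \ (Finset.univ.filter fun i => i < j).biUnion fun i => V (G i)).card) ↔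
      (∀ S' ⊆ S, S'.Nonempty →
        ∃ G ∈ S', 4 ≤ (V G \ (S'.erase G).biUnion V).card) := by
  constructor
  · rintro ⟨G, hGinj, hGmem, hGcond⟩ S' hS'sub hS'ne
    have hsurj : ∀ H ∈ S, ∃ i, G i = H := by
      intro H hH
      rw [← img_univ_eq G hGinj hGmem] at hH
      simpa using hH
    set T : Finset (Fin S.card) := Finset.univ.filter (fun i => G i ∈ S') with hT
    have hTne : T.Nonempty := by
      obtain ⟨H, hH⟩ := hS'ne
      obtain ⟨i, rfl⟩ := hsurj H (hS'sub hH)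
      exact ⟨i, Finset.mem_filter.2 ⟨Finset.mem_univ _, hH⟩⟩
    set j := T.max' hTne with hj
    have hjS' : G j ∈ S' := by
      have := T.max'_mem hTne
      simpa [hT] using this
    refine ⟨G j, hjS', ?_⟩
    have hsub : (S'.erase (G j)).biUnion V ⊆
        (Finset.univ.filter fun i => i < j).biUnion fun i => V (G i) := by
      apply Finset.biUnion_subset.2
      intro H hH
      obtain ⟨hne, hHS'⟩ := Finset.mem_erase.1 hH
      obtain ⟨i, rfl⟩ := hsurj H (hS'sub hHS')
      have hiT : i ∈ T := Finset.mem_filter.2 ⟨Finset.mem_univ _, hHS'⟩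
      have hle : i ≤ j := T.le_max' i hiT
      have hlt : i < j := lt_of_le_of_ne hle (fun h => hne (by rw [h]))
      exact Finset.subset_biUnion_of_mem (fun i => V (G i)) (Finset.mem_filter.2 ⟨Finset.mem_univ _, hlt⟩)
    calc 4 ≤ (V (G j) \ (Finset.univ.filter fun i => i < j).biUnion fun i => V (G i)).card :=
          hGcond j
      _ ≤ _ := Finset.card_le_card (Finset.sdiff_subset_sdiff le_rfl hsub)
  · intro h
    induction S using Finset.strongInduction with
    | _ S ih =>
    rcases S.eq_empty_or_nonempty with rfl | hSne
    · exact ⟨fun j => absurd j.2 (by simp), fun a b _ => absurd a.2 (by simp),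
        fun j => absurd j.2 (by simp), fun j => absurd j.2 (by simp)⟩
    · obtain ⟨G₀, hG₀S, hG₀⟩ := h S le_rfl hSne
      have h' : ∀ S' ⊆ S.erase G₀, S'.Nonempty →
          ∃ G ∈ S', 4 ≤ (V G \ (S'.erase G).biUnion V).card :=
        fun S' hsub => h S' (hsub.trans (Finset.erase_subset _ _))
      obtain ⟨G', hinj', hmem', hcond'⟩ := ih (S.erase G₀) (Finset.erase_ssubset hG₀S) h'
      have hm : S.card = (S.erase G₀).card + 1 := by
        rw [Finset.card_erase_of_mem hG₀S]
        have := Finset.card_pos.2 hSne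
        omega
      set G : Fin S.card → β :=
        fun j => (Fin.snoc G' G₀ : Fin ((S.erase G₀).card + 1) → β) (Fin.cast hm j) with hGdef
      have hGlt : ∀ (j : Fin S.card) (hjm : j.val < (S.erase G₀).card),
          G j = G' ⟨j.val, hjm⟩ := by
        intro j hjm
        have hc : Fin.cast hm j = Fin.castSucc ⟨j.val, hjm⟩ := by ext; simp
        show (Fin.snoc G' G₀ : Fin ((S.erase G₀).card + 1) → β) (Fin.cast hm j) = G' ⟨j.val, hjm⟩
        rw [hc, Fin.snoc_castSucc]
      have hGlast : ∀ (j : Fin S.card), j.val = (S.erase G₀).card → G j = G₀ := by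
        intro j hjm
        have hc : Fin.cast hm j = Fin.last (S.erase G₀).card := by ext; simp [hjm]
        show (Fin.snoc G' G₀ : Fin ((S.erase G₀).card + 1) → β) (Fin.cast hm j) = G₀
        rw [hc, Fin.snoc_last]
      have hGmem : ∀ j, G j ∈ S := by
        intro j
        have hj := j.2
        rcases Nat.lt_succ_iff_lt_or_eq.1 (show j.val < (S.erase G₀).card + 1 by omega)
          with hlt | heq
        · rw [hGlt j hlt]
          exact Finset.mem_of_mem_erase (hmem' _)
        · rw [hGlast j heq]; exact hG₀S
      have hGinj : Function.Injective G := by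
        intro a b hab
        have ha := a.2; have hb := b.2
        rcases Nat.lt_succ_iff_lt_or_eq.1 (show a.val < (S.erase G₀).card + 1 by omega)
          with hlta | heqa <;>
          rcases Nat.lt_succ_iff_lt_or_eq.1 (show b.val < (S.erase G₀).card + 1 by omega)
            with hltb | heqb
        · rw [hGlt a hlta, hGlt b hltb] at hab
          have := hinj' hab
          exact Fin.ext (by simpa [Fin.ext_iff] using this)
        · rw [hGlt a hlta, hGlast b heqb] at hab
          have := hmem' ⟨a.val, hlta⟩
          rw [hab] at this
          exact absurd this (by simp)
        · rw [hGlast a heqa, hGlt b hltb] at hab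
          have := hmem' ⟨b.val, hltb⟩
          rw [← hab] at this
          exact absurd this (by simp)
        · exact Fin.ext (heqa.trans heqb.symm)
      refine ⟨G, hGinj, hGmem, ?_⟩
      intro j
      have hj := j.2
      rcases Nat.lt_succ_iff_lt_or_eq.1 (show j.val < (S.erase G₀).card + 1 by omega)
        with hlt | heq
      · set k : Fin (S.erase G₀).card := ⟨j.val, hlt⟩ with hk
        have himg2 : Finset.image G (Finset.univ.filter (· < j)) =
            Finset.image G' (Finset.univ.filter (· < k)) := by
          ext x
          simp only [Finset.mem_image, Finset.mem_filter, Finset.mem_univ, true_and]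
          constructor
          · rintro ⟨i, hij, rfl⟩
            have hi : i.val < (S.erase G₀).card := lt_trans (Fin.lt_def.1 hij) hlt
            exact ⟨⟨i.val, hi⟩, Fin.lt_def.2 (Fin.lt_def.1 hij), (hGlt i hi).symm⟩
          · rintro ⟨i, hik, rfl⟩
            have hi : i.val < S.card := by omega
            refine ⟨⟨i.val, hi⟩, Fin.lt_def.2 (Fin.lt_def.1 hik), ?_⟩
            exact hGlt ⟨i.val, hi⟩ i.2
        have e1 : ((Finset.univ.filter fun i => i < j).biUnion fun i => V (G i)) =
            ((Finset.univ.filter fun i => i < k).biUnion fun i => V (G' i)) :=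
          calc ((Finset.univ.filter fun i => i < j).biUnion fun i => V (G i))
              = (Finset.image G (Finset.univ.filter (· < j))).biUnion V := by
                rw [Finset.image_biUnion]
            _ = (Finset.image G' (Finset.univ.filter (· < k))).biUnion V := by rw [himg2]
            _ = ((Finset.univ.filter fun i => i < k).biUnion fun i => V (G' i)) :=
                Finset.image_biUnion
        rw [e1, hGlt j hlt]
        exact hcond' k
      · have hfe : (Finset.univ.filter fun i => i < j) = Finset.univ.erase j := by
          ext i
          simp only [Finset.mem_filter, Finset.mem_univ, true_and, Finset.mem_erase, and_true]
          have hi := i.2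
          constructor
          · intro hij; exact Fin.ne_of_lt hij
          · intro hne
            refine Fin.lt_def.2 ?_
            have h1 : i.val ≠ j.val := fun hv => hne (Fin.ext hv)
            have h2 : i.val < S.card := i.2
            omega
        have himg3 : Finset.image G (Finset.univ.erase j) = S.erase G₀ := by
          rw [Finset.image_erase hGinj, img_univ_eq G hGinj hGmem, hGlast j heq]
        have e1 : ((Finset.univ.filter fun i => i < j).biUnion fun i => V (G i)) =
            (S.erase G₀).biUnion V :=
          calc ((Finset.univ.filter fun i => i < j).biUnion fun i => V (G i))
              = (Finset.image G (Finset.univ.filter (· < j))).biUnion V := by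
                rw [Finset.image_biUnion]
            _ = (S.erase G₀).biUnion V := by rw [hfe, himg3]
        rw [e1, hGlast j heq]
        exact hG₀
end

section
/- Generalization of the previous statement for arbitrary threshold: Let S be a finite set, V : S → Finset α, and c ∈ ℕ. There exists an enumeration G_1, ..., G_n of S with |V(G_j) \ ⋃_{i<j} V(G_i)| ≥ c for all j, if and only if every nonempty subset S' ⊆ S contains an element G with |V(G) \ ⋃_{H ∈ S' \ {G}} V(H)| ≥ c. -/
private lemma aux11 {α β : Type} [DecidableEq α] [DecidableEq β] (V : β → Finset α) (c : ℕ) :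
    ∀ n (S : Finset β), S.card = n →
    (∀ S' ⊆ S, S'.Nonempty → ∃ G ∈ S', c ≤ (V G \ (S'.erase G).biUnion V).card) →
    ∃ G : Fin S.card → β, Function.Injective G ∧ (∀ j, G j ∈ S) ∧
      ∀ j : Fin S.card,
        c ≤ (V (G j) \ (Finset.univ.filter fun i => i < j).biUnion fun i => V (G i)).card := by
  intro n
  induction n with
  | zero =>
    intro S hcard _
    refine ⟨fun j => absurd j.isLt (by omega), ?_, ?_, ?_⟩
    · intro a b _; exact absurd a.isLt (by omega)
    · intro j; exact absurd j.isLt (by omega)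
    · intro j; exact absurd j.isLt (by omega)
  | succ n ih =>
    intro S hcard hS
    have hne : S.Nonempty := Finset.card_pos.mp (by omega)
    obtain ⟨g, hg, hgc⟩ := hS S le_rfl hne
    set T := S.erase g with hTdef
    have hT : T.card = n := by
      rw [hTdef, Finset.card_erase_of_mem hg]; omega
    obtain ⟨F, hFinj, hFmem, hFc⟩ := ih T hT (fun S' hS' hS'ne =>
      hS S' (hS'.trans (Finset.erase_subset _ _)) hS'ne)
    have hgT : g ∉ T := Finset.notMem_erase g S
    refine ⟨fun j => if h : (j : ℕ) < T.card then F ⟨j, h⟩ else g, ?_, ?_, ?_⟩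
    · intro a b hab
      simp only at hab
      by_cases ha : (a : ℕ) < T.card <;> by_cases hb : (b : ℕ) < T.card
      · rw [dif_pos ha, dif_pos hb] at hab
        have h2 : (a : ℕ) = (b : ℕ) := Fin.mk.inj (hFinj hab)
        exact Fin.ext h2
      · rw [dif_pos ha, dif_neg hb] at hab
        exact absurd (hab ▸ hFmem ⟨a, ha⟩) hgT
      · rw [dif_neg ha, dif_pos hb] at hab
        exact absurd (hab ▸ hFmem ⟨b, hb⟩) hgT
      · have : (a : ℕ) = (b : ℕ) := by have := a.isLt; have := b.isLt; omega
        exact Fin.ext this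
    · intro j
      beta_reduce
      by_cases h : (j : ℕ) < T.card
      · rw [dif_pos h]; exact Finset.mem_of_mem_erase (hFmem _)
      · rw [dif_neg h]; exact hg
    · intro j
      beta_reduce
      by_cases h : (j : ℕ) < T.card
      · rw [dif_pos h]
        have hbu : ((Finset.univ.filter fun i : Fin S.card => i < j).biUnion
              fun i => V (if h' : (i : ℕ) < T.card then F ⟨i, h'⟩ else g)) =
            ((Finset.univ.filter fun i : Fin T.card => i < ⟨j, h⟩).biUnion fun i => V (F i)) := by
          ext a
          simp only [Finset.mem_biUnion, Finset.mem_filter, Finset.mem_univ, true_and]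
          constructor
          · rintro ⟨i, hi, ha⟩
            have hi' : (i : ℕ) < T.card := lt_trans hi h
            rw [dif_pos hi'] at ha
            exact ⟨⟨i, hi'⟩, hi, ha⟩
          · rintro ⟨i, hi, ha⟩
            have hi2 : (i : ℕ) < S.card := by have := i.isLt; omega
            refine ⟨⟨i, hi2⟩, hi, ?_⟩
            rw [dif_pos i.isLt]
            exact ha
        rw [hbu]
        exact hFc ⟨j, h⟩
      · rw [dif_neg h]
        have hsub : ((Finset.univ.filter fun i : Fin S.card => i < j).biUnion
              fun i => V (if h' : (i : ℕ) < T.card then F ⟨i, h'⟩ else g)) ⊆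
            T.biUnion V := by
          intro a ha
          rw [Finset.mem_biUnion] at ha ⊢
          obtain ⟨i, hi, ha⟩ := ha
          simp only [Finset.mem_filter] at hi
          have hi' : (i : ℕ) < T.card := by
            have hj := j.isLt
            have := hi.2
            have : (i : ℕ) < (j : ℕ) := this
            omega
          rw [dif_pos hi'] at ha
          exact ⟨F ⟨i, hi'⟩, hFmem _, ha⟩
        calc c ≤ (V g \ (S.erase g).biUnion V).card := hgc
          _ ≤ (V g \ (Finset.univ.filter fun i : Fin S.card => i < j).biUnion
                (fun i => V (if h' : (i : ℕ) < T.card then F ⟨i, h'⟩ else g))).card :=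
            Finset.card_le_card (Finset.sdiff_subset_sdiff le_rfl hsub)

theorem stmt11 {α β : Type} [DecidableEq α] [DecidableEq β]
    (S : Finset β) (V : β → Finset α) (c : ℕ) :
    (∃ G : Fin S.card → β, Function.Injective G ∧ (∀ j, G j ∈ S) ∧
        ∀ j : Fin S.card,
          c ≤ (V (G j) \ (Finset.univ.filter fun i => i < j).biUnion fun i => V (G i)).card) ↔
      (∀ S' ⊆ S, S'.Nonempty →
        ∃ G ∈ S', c ≤ (V G \ (S'.erase G).biUnion V).card) := by
  constructor
  · rintro ⟨G, hGinj, hGmem, hGc⟩ S' hS' hS'ne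
    have hsurj : ∀ s ∈ S, ∃ j, G j = s := by
      intro s hs
      have himg : Finset.image G Finset.univ = S := by
        apply Finset.eq_of_subset_of_card_le
        · intro x hx
          simp only [Finset.mem_image] at hx
          obtain ⟨j, _, rfl⟩ := hx
          exact hGmem j
        · rw [Finset.card_image_of_injective _ hGinj, Finset.card_univ, Fintype.card_fin]
      rw [← himg] at hs
      simp only [Finset.mem_image] at hs
      obtain ⟨j, _, hj⟩ := hs
      exact ⟨j, hj⟩
    set I : Finset (Fin S.card) := Finset.univ.filter (fun j => G j ∈ S') with hI
    have hIne : I.Nonempty := by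
      obtain ⟨x, hx⟩ := hS'ne
      obtain ⟨j, hj⟩ := hsurj x (hS' hx)
      exact ⟨j, by simp [hI, hj, hx]⟩
    set j := I.max' hIne with hjdef
    have hjI : G j ∈ S' := by
      have := I.max'_mem hIne
      simp only [hI, Finset.mem_filter] at this
      exact this.2
    refine ⟨G j, hjI, ?_⟩
    have hsub : (S'.erase (G j)).biUnion V ⊆
        (Finset.univ.filter fun i => i < j).biUnion fun i => V (G i) := by
      intro a ha
      rw [Finset.mem_biUnion] at ha ⊢
      obtain ⟨H, hH, ha⟩ := ha
      have hHS' : H ∈ S' := Finset.mem_of_mem_erase hH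
      obtain ⟨i, hi⟩ := hsurj H (hS' hHS')
      have hiI : i ∈ I := by simp [hI, hi, hHS']
      have hle : i ≤ j := I.le_max' i hiI
      have hne' : i ≠ j := by
        intro h; apply Finset.ne_of_mem_erase hH; rw [← hi, h]
      refine ⟨i, by simp [lt_of_le_of_ne hle hne'], by rw [hi]; exact ha⟩
    calc c ≤ (V (G j) \ (Finset.univ.filter fun i => i < j).biUnion fun i => V (G i)).card :=
          hGc j
      _ ≤ (V (G j) \ (S'.erase (G j)).biUnion V).card :=
          Finset.card_le_card (Finset.sdiff_subset_sdiff le_rfl hsub)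
  · intro h
    exact aux11 V c S.card S rfl h
end
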